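/- arXiv:2405.10069 — 7 statements merged into one kernel-verified Lean document; each statement's English description precedes it below -/
import Mathlib

section
/- Let S be a family of subsets of a set M such that every member of S is either a singleton, a downward-closed set (initial segment) of a linear order on M, or a coset of a fixed subgroup W of an abelian group structure on M. Then S has breadth 2: for any finite collection A₁,...,Aₘ ∈ S (m ≥ 2) with nonempty intersection, there exist indices j, k such that A₁ ∩ ... ∩ Aₘ = Aⱼ ∩ Aₖ. -/
/-- A family of singletons, initial segments, and cosets of a fixed subgroup has breadth 2. -/
theorem stmt_1 {M : Type*} [AddCommGroup M] [LinearOrder M] [IsOrderedAddMonoid M] (W : AddSubgroup M)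
    (S : Set (Set M))
    (hS : ∀ A ∈ S, (∃ a, A = {a}) ∨ (∀ x y : M, x ∈ A → y ≤ x → y ∈ A) ∨
      (∃ a, A = {x | x - a ∈ W}))
    (m : ℕ) (hm : 2 ≤ m) (A : Fin m → Set M) (hA : ∀ i, A i ∈ S)
    (hne : (⋂ i, A i).Nonempty) :
    ∃ j k, (⋂ i, A i) = A j ∩ A k := by
  classical
  obtain ⟨x, hx⟩ := hne
  have hx' : ∀ i, x ∈ A i := fun i => Set.mem_iInter.mp hx i
  by_cases hsing : ∃ i a, A i = ({a} : Set M)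
  · obtain ⟨i, a, ha⟩ := hsing
    have hxa : x = a := by have := hx' i; rw [ha] at this; exact this
    refine ⟨i, i, Set.Subset.antisymm (fun z hz => ⟨Set.mem_iInter.mp hz i,
      Set.mem_iInter.mp hz i⟩) ?_⟩
    rintro z ⟨hz, -⟩
    rw [ha] at hz
    have hz' : z = a := hz
    rw [Set.mem_iInter]
    intro i'
    rw [hz', ← hxa]
    exact hx' i'
  push_neg at hsing
  set Seg : Fin m → Prop := fun i => ∀ y z : M, y ∈ A i → z ≤ y → z ∈ A i with hSeg
  have hclass : ∀ i, Seg i ∨ A i = {z | z - x ∈ W} := by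
    intro i
    rcases hS (A i) (hA i) with ⟨a, ha⟩ | h | ⟨a, ha⟩
    · exact absurd ha (hsing i a)
    · exact Or.inl (fun y z hy hz => h y z hy hz)
    · right
      have hxa : x - a ∈ W := by have := hx' i; rw [ha] at this; exact this
      ext z
      rw [ha]
      constructor
      · intro hz
        have hz' : z - a ∈ W := hz
        have : z - x = (z - a) - (x - a) := by abel
        show z - x ∈ W
        rw [this]; exact sub_mem hz' hxa
      · intro hz
        have hz' : z - x ∈ W := hz
        have : z - a = (z - x) + (x - a) := by abel
        show z - a ∈ W
        rw [this]; exact add_mem hz' hxa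
  have htotal : ∀ i i', Seg i → Seg i' → A i ⊆ A i' ∨ A i' ⊆ A i := by
    intro i i' hi hi'
    by_cases h : A i ⊆ A i'
    · exact Or.inl h
    · right
      obtain ⟨z, hz, hz'⟩ := Set.not_subset.mp h
      intro w hw
      have hwz : w ≤ z := by
        by_contra hlt
        push_neg at hlt
        exact hz' (hi' w z hw hlt.le)
      exact hi z w hz hwz
  have hmin : (∃ i, Seg i) → ∃ k, Seg k ∧ ∀ i, Seg i → A k ⊆ A i := by
    rintro ⟨i0, hi0⟩
    have hne' : (Finset.univ.filter (fun i => Seg i)).Nonempty :=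
      ⟨i0, Finset.mem_filter.mpr ⟨Finset.mem_univ _, hi0⟩⟩
    obtain ⟨B, hB, hBmin'⟩ := Finset.exists_minimal
      (s := (Finset.univ.filter fun i => Seg i).image A) (hne'.image A)
    have hBmin : ∀ C ∈ (Finset.univ.filter fun i => Seg i).image A, ¬ C < B :=
      fun C hC hlt => hlt.not_ge (hBmin' hC hlt.le)
    obtain ⟨k, hk, hkB⟩ := Finset.mem_image.mp hB
    have hkSeg : Seg k := (Finset.mem_filter.mp hk).2
    refine ⟨k, hkSeg, ?_⟩
    intro i hi
    have hBi := hBmin (A i) (Finset.mem_image_of_mem A (Finset.mem_filter.mpr ⟨Finset.mem_univ _, hi⟩))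
    rcases htotal k i hkSeg hi with h | h
    · exact h
    · rw [← hkB] at hBi
      by_cases heq : A i = A k
      · rw [heq]
      · exact absurd (lt_of_le_of_ne h heq) hBi
  by_cases hcoset : ∃ j, A j = {z | z - x ∈ W}
  · obtain ⟨j, hj⟩ := hcoset
    by_cases hseg : ∃ i, Seg i
    · obtain ⟨k, hk, hkmin⟩ := hmin hseg
      refine ⟨j, k, Set.Subset.antisymm (fun z hz => ⟨Set.mem_iInter.mp hz j,
        Set.mem_iInter.mp hz k⟩) ?_⟩
      rintro z ⟨hzj, hzk⟩
      rw [Set.mem_iInter]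
      intro i
      rcases hclass i with hi | hi
      · exact hkmin i hi hzk
      · rw [hi, ← hj]; exact hzj
    · push_neg at hseg
      refine ⟨j, j, Set.Subset.antisymm (fun z hz => ⟨Set.mem_iInter.mp hz j,
        Set.mem_iInter.mp hz j⟩) ?_⟩
      rintro z ⟨hzj, -⟩
      rw [Set.mem_iInter]
      intro i
      rcases hclass i with hi | hi
      · exact absurd hi (hseg i)
      · rw [hi, ← hj]; exact hzj
  · push_neg at hcoset
    have hseg : ∃ i, Seg i := by
      rcases hclass ⟨0, by omega⟩ with hi | hi
      · exact ⟨_, hi⟩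
      · exact absurd hi (hcoset _)
    obtain ⟨k, hk, hkmin⟩ := hmin hseg
    refine ⟨k, k, Set.Subset.antisymm (fun z hz => ⟨Set.mem_iInter.mp hz k,
      Set.mem_iInter.mp hz k⟩) ?_⟩
    rintro z ⟨hzk, -⟩
    rw [Set.mem_iInter]
    intro i
    rcases hclass i with hi | hi
    · exact hkmin i hi hzk
    · exact absurd hi (hcoset i)
end

section
/- Let M be an ordered abelian group, N a proper dense subgroup, and let φ(x; y) define the set {x : y ≤ x < y+1 ∨ x − y ∈ N} for a fixed positive element 1 ∈ N. For every k there is a set A ⊆ M with |A| = k such that the family {A ∩ φ(M, b) : b ∈ M} has at least (k² + k + 2)/2 members: namely it contains ∅, all singletons of A, and all two-element subsets of A. -/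
private lemma between_aux {α : Type*} [AddCommGroup α] [LinearOrder α] [IsOrderedAddMonoid α] {w n lo e : α}
    (h1 : lo - e - w < n) (h2 : n < lo - w) : w + n < lo ∧ lo < w + n + e := by
  refine ⟨lt_sub_iff_add_lt'.mp h2, ?_⟩
  have h3 : lo - e < n + w := sub_lt_iff_lt_add.mp h1
  have h4 : lo < n + w + e := sub_lt_iff_lt_add.mp h3
  rwa [add_comm n w] at h4

theorem main_aux {M : Type*} [AddCommGroup M] [LinearOrder M] [IsOrderedAddMonoid M] (N : AddSubgroup M)
    (hdense : ∀ u v : M, u < v → ∃ n ∈ N, u < n ∧ n < v)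
    (e : M) (he : 0 < e) (k : ℕ) (x : Fin k → M)
    (hs : ∀ i j : Fin k, i < j → x i + e < x j)
    (c : M) (hc : ∀ i, x i - c ∉ N)
    (hp : ∀ i j : Fin k, i < j → (∀ l, l ≠ j → x l - x j ∉ N) ∨
          (x j - x i ∈ N ∧ ∀ l, l ≠ i → l ≠ j → x l - x i ∉ N)) :
    ∃ A : Finset M, A.card = k ∧
      k ^ 2 + k + 2 ≤ 2 * Set.ncard
        {s : Set M | ∃ b : M, s = ↑A ∩ {x | (b ≤ x ∧ x < b + e) ∨ x - b ∈ N}} := by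
  classical
  have hinj : Function.Injective x := by
    intro i j h
    by_contra hne
    rcases lt_or_gt_of_ne hne with h1 | h1
    · have h2 := hs i j h1; rw [h] at h2
      exact absurd ((lt_add_of_pos_right (x j) he).trans h2) (lt_irrefl _)
    · have h2 := hs j i h1; rw [h] at h2
      exact absurd ((lt_add_of_pos_right (x j) he).trans h2) (lt_irrefl _)
  refine ⟨Finset.image x Finset.univ, ?_, ?_⟩
  · rw [Finset.card_image_of_injective _ hinj, Finset.card_univ, Fintype.card_fin]
  have hA : (↑(Finset.image x Finset.univ) : Set M) = Set.range x := by
    rw [Finset.coe_image, Finset.coe_univ, Set.image_univ]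
  set F := {s : Set M | ∃ b : M,
      s = ↑(Finset.image x Finset.univ) ∩ {y : M | (b ≤ y ∧ y < b + e) ∨ y - b ∈ N}} with hFdef
  -- interval trick: if x i < b + e and b ≤ x i then x l ∈ [b, b+e) implies l = i
  have hint : ∀ (i l : Fin k) (b : M), x i < b + e → b ≤ x i →
      (b ≤ x l ∧ x l < b + e) → l = i := by
    intro i l b hb1 hb2 hl
    rcases lt_trichotomy l i with h | h | h
    · exact absurd ((hb1.trans_le (add_le_add_left hl.1 e)).trans (hs l i h)) (lt_irrefl _)
    · exact h
    · exact absurd ((hl.2.trans_le (add_le_add_left hb2 e)).trans (hs i l h)) (lt_irrefl _)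
  -- empty trace
  have hempty : (∅ : Set M) ∈ F := by
    obtain ⟨m, hm⟩ := Finite.exists_le x
    obtain ⟨n, hnN, hn1, hn2⟩ := hdense (m - c) (m - c + e) (lt_add_of_pos_right _ he)
    have hmlt : m < c + n := by
      have h3 := sub_lt_iff_lt_add.mp hn1
      rwa [add_comm] at h3
    refine ⟨c + n, ?_⟩
    rw [hA]
    ext y
    simp only [Set.mem_empty_iff_false, Set.mem_inter_iff, Set.mem_range, false_iff,
      Set.mem_setOf_eq]
    rintro ⟨⟨i, rfl⟩, hy⟩
    rcases hy with ⟨h1, _⟩ | h1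
    · exact absurd (h1.trans (hm i)) (not_le.mpr hmlt)
    · refine hc i ?_
      have heq : x i - c = (x i - (c + n)) + n := by abel
      rw [heq]; exact N.add_mem h1 hnN
  -- singleton traces
  have hsing : ∀ i : Fin k, ({x i} : Set M) ∈ F := by
    intro i
    obtain ⟨n, hnN, hn1, hn2⟩ :=
      hdense (x i - e - c) (x i - c) (sub_lt_sub_right (sub_lt_self _ he) c)
    obtain ⟨hb1, hb2⟩ := between_aux hn1 hn2
    refine ⟨c + n, ?_⟩
    rw [hA]
    ext y
    simp only [Set.mem_singleton_iff, Set.mem_inter_iff, Set.mem_range, Set.mem_setOf_eq]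
    constructor
    · rintro rfl
      exact ⟨⟨i, rfl⟩, Or.inl ⟨hb1.le, hb2⟩⟩
    · rintro ⟨⟨l, rfl⟩, hy⟩
      rcases hy with h1 | h1
      · rw [hint i l (c + n) hb2 hb1.le h1]
      · exfalso
        refine hc l ?_
        have heq : x l - c = (x l - (c + n)) + n := by abel
        rw [heq]; exact N.add_mem h1 hnN
  -- pair traces
  have hpair : ∀ i j : Fin k, i < j → ({x i, x j} : Set M) ∈ F := by
    intro i j hij
    rcases hp i j hij with hlone | ⟨hsame, hothers⟩
    · -- b in the coset of x j, just below x i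
      obtain ⟨n, hnN, hn1, hn2⟩ :=
        hdense (x i - e - x j) (x i - x j) (sub_lt_sub_right (sub_lt_self _ he) _)
      obtain ⟨hb1, hb2⟩ := between_aux hn1 hn2
      refine ⟨x j + n, ?_⟩
      rw [hA]
      ext y
      simp only [Set.mem_insert_iff, Set.mem_singleton_iff, Set.mem_inter_iff, Set.mem_range,
        Set.mem_setOf_eq]
      constructor
      · rintro (rfl | rfl)
        · exact ⟨⟨i, rfl⟩, Or.inl ⟨hb1.le, hb2⟩⟩
        · refine ⟨⟨j, rfl⟩, Or.inr ?_⟩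
          have heq : x j - (x j + n) = -n := by abel
          rw [heq]; exact N.neg_mem hnN
      · rintro ⟨⟨l, rfl⟩, hy⟩
        rcases hy with h1 | h1
        · left
          rw [hint i l (x j + n) hb2 hb1.le h1]
        · right
          by_contra hne
          refine hlone l (fun h => hne (by rw [h])) ?_
          have heq : x l - x j = (x l - (x j + n)) + n := by abel
          rw [heq]; exact N.add_mem h1 hnN
    · -- x i and x j in the same coset: take b = x i
      refine ⟨x i, ?_⟩
      rw [hA]
      ext y
      simp only [Set.mem_insert_iff, Set.mem_singleton_iff, Set.mem_inter_iff, Set.mem_range,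
        Set.mem_setOf_eq]
      constructor
      · rintro (rfl | rfl)
        · exact ⟨⟨i, rfl⟩, Or.inl ⟨le_refl _, lt_add_of_pos_right _ he⟩⟩
        · exact ⟨⟨j, rfl⟩, Or.inr hsame⟩
      · rintro ⟨⟨l, rfl⟩, hy⟩
        rcases hy with h1 | h1
        · left
          rw [hint i l (x i) (lt_add_of_pos_right _ he) (le_refl _) h1]
        · by_contra hne
          push_neg at hne
          exact hothers l (fun h => hne.1 (by rw [h])) (fun h => hne.2 (by rw [h])) h1
  -- counting
  have hFin : F.Finite := by
    refine (Set.Finite.finite_subsets (Finset.image x Finset.univ).finite_toSet).subset ?_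
    rintro s ⟨b, rfl⟩
    exact Set.inter_subset_left
  set g : Option (Sym2 (Fin k)) → Set M := fun o =>
    o.elim ∅ (Sym2.lift ⟨fun i j => ({x i, x j} : Set M), fun i j => Set.pair_comm _ _⟩) with hg
  have hgnone : g none = ∅ := rfl
  have hgsome : ∀ i j : Fin k, g (some s(i, j)) = {x i, x j} := fun i j => rfl
  have hgrange : Set.range g ⊆ F := by
    rintro s ⟨o, rfl⟩
    rcases o with _ | z
    · exact hempty
    · induction z using Sym2.ind with
      | _ i j =>
        rw [hgsome]
        rcases lt_trichotomy i j with h | h | h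
        · exact hpair i j h
        · subst h
          have hpe : ({x i, x i} : Set M) = {x i} := by simp
          rw [hpe]; exact hsing i
        · rw [Set.pair_comm]; exact hpair j i h
  have hginj : Function.Injective g := by
    rintro (_ | z1) (_ | z2) hfo
    · rfl
    · exfalso
      revert hfo
      induction z2 using Sym2.ind with
      | _ i j =>
        intro hfo
        rw [hgnone, hgsome] at hfo
        exact (Set.mem_empty_iff_false (x i)).mp (hfo ▸ Set.mem_insert _ _)
    · exfalso
      revert hfo
      induction z1 using Sym2.ind with
      | _ i j =>
        intro hfo
        rw [hgnone, hgsome] at hfo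
        exact (Set.mem_empty_iff_false (x i)).mp (hfo.symm ▸ Set.mem_insert _ _)
    · congr 1
      revert hfo
      induction z1 using Sym2.ind with
      | _ i j =>
        induction z2 using Sym2.ind with
        | _ i' j' =>
          intro hfo
          rw [hgsome, hgsome] at hfo
          rw [Set.pair_eq_pair_iff] at hfo
          rw [Sym2.eq_iff]
          rcases hfo with ⟨h1, h2⟩ | ⟨h1, h2⟩
          · exact Or.inl ⟨hinj h1, hinj h2⟩
          · exact Or.inr ⟨hinj h1, hinj h2⟩
  have hcard : Nat.card (Option (Sym2 (Fin k))) ≤ F.ncard := by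
    have h1 : (Set.range g).ncard = Nat.card (Option (Sym2 (Fin k))) := by
      rw [← Set.image_univ, Set.ncard_image_of_injective _ hginj, Set.ncard_univ]
    rw [← h1]
    exact Set.ncard_le_ncard hgrange hFin
  have hsym : Nat.card (Option (Sym2 (Fin k))) = (k + 1).choose 2 + 1 := by
    rw [Nat.card_eq_fintype_card, Fintype.card_option, Sym2.card, Fintype.card_fin]
  have hchoose : (k + 1).choose 2 * 2 = k ^ 2 + k := by
    have h2 : (k + 1) * (k + 1 - 1) = k ^ 2 + k := by
      rw [Nat.add_sub_cancel]; ring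
    have hev : Even (k ^ 2 + k) := by
      have h3 := Nat.even_mul_succ_self k
      rwa [show k * (k + 1) = k ^ 2 + k from by ring] at h3
    rw [Nat.choose_two_right, h2, Nat.div_mul_cancel hev.two_dvd]
  rw [hsym] at hcard
  rw [show k ^ 2 + k = (k + 1).choose 2 * 2 from hchoose.symm]
  omega

/-- Lower bound `(k²+k+2)/2` for the number of traces of the formula
`y ≤ x < y+1 ∨ x - y ∈ N` on a suitable `k`-element set. -/
theorem stmt_4 {M : Type*} [AddCommGroup M] [LinearOrder M] [IsOrderedAddMonoid M] (N : AddSubgroup M)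
    (hproper : N ≠ ⊤)
    (hdense : ∀ u v : M, u < v → ∃ n ∈ N, u < n ∧ n < v)
    (e : M) (heN : e ∈ N) (he : 0 < e) (k : ℕ) (a : Fin k → M)
    (ha : ∀ i j : Fin k, i < j → a i + e < a j)
    (haN : ∀ i j : Fin k, i ≠ j → a i - a j ∉ N) :
    ∃ A : Finset M, A.card = k ∧
      k ^ 2 + k + 2 ≤ 2 * Set.ncard
        {s : Set M | ∃ b : M, s = ↑A ∩ {x | (b ≤ x ∧ x < b + e) ∨ x - b ∈ N}} := by
  obtain ⟨d, hd⟩ : ∃ d : M, d ∉ N := by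
    by_contra h
    push_neg at h
    exact hproper ((AddSubgroup.eq_top_iff' N).mpr h)
  rcases lt_or_ge k 2 with hk | hk
  · -- k ≤ 1 : use x = a, free coset via d
    refine main_aux N hdense e he k a ha
      (if h : 0 < k then a ⟨0, h⟩ - d else 0) ?_ ?_
    · intro i
      have h0 : 0 < k := i.pos
      rw [dif_pos h0]
      have hi : i = ⟨0, h0⟩ := by
        apply Fin.ext
        omega
      rw [hi]
      intro hmem
      apply hd
      have heq : a ⟨0, h0⟩ - (a ⟨0, h0⟩ - d) = d := by abel
      rwa [heq] at hmem
    · intro i j hij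
      exfalso
      have hij' : i.val < j.val := hij
      have := j.isLt
      omega
  · -- k ≥ 2 : move a 1's point into a 0's coset, free coset is a 1 + N
    have h0k : 0 < k := by omega
    have h1k : 1 < k := by omega
    set i0 : Fin k := ⟨0, h0k⟩ with hi0
    set i1 : Fin k := ⟨1, h1k⟩ with hi1
    have h01 : i0 < i1 := by simp [hi0, hi1, Fin.lt_def]
    obtain ⟨n, hnN, hn1, hn2⟩ :=
      hdense e (a i1 - a i0) (lt_sub_iff_add_lt'.mpr (ha i0 i1 h01))
    set x : Fin k → M := fun i => if i.val = 1 then a i0 + n else a i with hx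
    have hxval : ∀ i : Fin k, i.val ≠ 1 → x i = a i := by
      intro i h; simp [hx, h]
    have hx1 : x i1 = a i0 + n := by simp [hx, hi1]
    have hn3 : a i0 + n < a i1 := lt_sub_iff_add_lt'.mp hn2
    -- spacing
    have hspace : ∀ i j : Fin k, i < j → x i + e < x j := by
      intro i j hij
      rcases eq_or_ne j.val 1 with hj | hj
      · have hi : i.val = 0 := by
          have := Fin.lt_def.mp hij; omega
        have hji : j = i1 := Fin.ext hj
        have hii : i = i0 := Fin.ext hi
        rw [hji, hx1, hii, hxval i0 (by simp [hi0])]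
        exact add_lt_add_right hn1 _
      · rw [hxval j hj]
        rcases eq_or_ne i.val 1 with hi | hi
        · have hii : i = i1 := Fin.ext hi
          rw [hii, hx1]
          have hj2 : i1 < j := by
            rw [Fin.lt_def] at hij ⊢
            rw [hii] at hij
            exact hij
          exact (add_lt_add_left hn3 e).trans (ha i1 j hj2)
        · rw [hxval i hi]
          exact ha i j hij
    -- free coset : a i1 + N
    have hfree : ∀ i : Fin k, x i - a i1 ∉ N := by
      intro i
      rcases eq_or_ne i.val 1 with hi | hi
      · have hii : i = i1 := Fin.ext hi
        rw [hii, hx1]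
        intro hmem
        apply haN i0 i1 (Fin.ne_of_lt h01)
        have heq : a i0 - a i1 = (a i0 + n - a i1) - n := by abel
        rw [heq]; exact N.sub_mem hmem hnN
      · rw [hxval i hi]
        exact haN i i1 (by intro h; exact hi (by rw [h]))
    -- pair condition
    have hpcond : ∀ i j : Fin k, i < j → (∀ l, l ≠ j → x l - x j ∉ N) ∨
          (x j - x i ∈ N ∧ ∀ l, l ≠ i → l ≠ j → x l - x i ∉ N) := by
      intro i j hij
      rcases eq_or_ne j.val 1 with hj | hj
      · -- j = i1, i = i0 : same-coset pair
        right
        have hji : j = i1 := Fin.ext hj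
        have hi : i.val = 0 := by have := Fin.lt_def.mp hij; omega
        have hii : i = i0 := Fin.ext hi
        constructor
        · rw [hji, hii, hx1, hxval i0 (by simp [hi0])]
          have heq : a i0 + n - a i0 = n := by abel
          rw [heq]; exact hnN
        · intro l hl1 hl2
          rw [hii, hxval i0 (by simp [hi0])]
          have hlv : l.val ≠ 1 := by
            intro h; exact hl2 (by rw [hji]; exact Fin.ext h)
          rw [hxval l hlv]
          refine haN l i0 ?_
          intro h; exact hl1 (by rw [hii]; exact h)
      · -- j alone in its coset
        left
        intro l hl
        rw [hxval j hj]
        rcases eq_or_ne l.val 1 with hlv | hlv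
        · have hll : l = i1 := Fin.ext hlv
          rw [hll, hx1]
          intro hmem
          apply haN i0 j
          · intro h
            rw [← h] at hij
            have h5 := Fin.lt_def.mp hij
            simp [hi0] at h5
          · have heq : a i0 - a j = (a i0 + n - a j) - n := by abel
            rw [heq]; exact N.sub_mem hmem hnN
        · rw [hxval l hlv]
          exact haN l j hl
    exact main_aux N hdense e he k x hspace (a i1) hfree hpcond
end

section
/- Let M be a densely ordered abelian group, N a dense subgroup, 1 ∈ N positive, and a₁, a₂, ... a sequence in M with aᵢ + 1 < a_{i+1} and aᵢ − aⱼ ∉ N for i ≠ j. Then for every pair (i, j) there exists c ∈ M with aᵢ < c < aᵢ + 1, c − aⱼ ∈ N, and for all k ≠ i, c ∉ (a_k, a_k + 1), and for all l ≠ j, c − a_l ∉ N. -/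
/-- ICT pattern of depth 2: a point realizing exactly the `i`-th interval condition and the
`j`-th coset condition. -/
theorem stmt_6 {M : Type*} [AddCommGroup M] [LinearOrder M] [IsOrderedAddMonoid M] [DenselyOrdered M]
    (N : AddSubgroup M)
    (hdense : ∀ u v : M, u < v → ∃ n ∈ N, u < n ∧ n < v)
    (e : M) (heN : e ∈ N) (he : 0 < e) (a : ℕ → M)
    (ha : ∀ i : ℕ, a i + e < a (i + 1))
    (haN : ∀ i j : ℕ, i ≠ j → a i - a j ∉ N) :
    ∀ i j : ℕ, ∃ c : M, a i < c ∧ c < a i + e ∧ c - a j ∈ N ∧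
      (∀ k : ℕ, k ≠ i → ¬(a k < c ∧ c < a k + e)) ∧
      (∀ l : ℕ, l ≠ j → c - a l ∉ N) := by
  have hmono : ∀ m n : ℕ, m < n → a m + e < a n := by
    intro m n h
    induction n with
    | zero => omega
    | succ n ih =>
      rcases Nat.lt_succ_iff_lt_or_eq.mp h with h' | h'
      · exact (ih h').trans ((lt_add_of_pos_right _ he).trans (ha n))
      · subst h'; exact ha m
  intro i j
  obtain ⟨n, hnN, hn1, hn2⟩ := hdense (a i - a j) (a i + e - a j)
    (by simpa using lt_add_of_pos_right (a i) he)
  have hc1 : a i < a j + n := by rwa [sub_lt_iff_lt_add'] at hn1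
  have hc2 : a j + n < a i + e := by rwa [lt_sub_iff_add_lt'] at hn2
  refine ⟨a j + n, hc1, hc2, by simpa using hnN, ?_, ?_⟩
  · intro k hk ⟨h1, h2⟩
    rcases lt_or_gt_of_ne hk with h | h
    · exact lt_irrefl _ (h2.trans ((hmono k i h).trans hc1))
    · exact lt_irrefl _ ((hc2.trans (hmono i k h)).trans h1)
  · intro l hl hmem
    have h0 : (a j + n - a l) - n ∈ N := AddSubgroup.sub_mem N hmem hnN
    have h2 : a j - a l ∈ N := by
      have e1 : a j + n - a l - n = a j - a l := by abel
      rwa [e1] at h0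
    exact haN j l (fun h => hl h.symm) h2
end

section
/- Let K be an ordered field, V an ordered K-vector space, W a proper subspace dense in V, with 1 ∈ W, 1 > 0. For every k there exist a₁,...,a_k ∈ V with aᵢ + 1 < a_{i+1} and aᵢ − aⱼ ∉ W for all i ≠ j. -/
/-- In a dense pair of ordered vector spaces, for every `k` there are `a₁, …, a_k` with
`aᵢ + 1 < a_{i+1}` and `aᵢ - aⱼ ∉ W` for `i ≠ j`. -/
theorem stmt_12 {K V : Type*} [Field K] [LinearOrder K] [IsStrictOrderedRing K]
    [AddCommGroup V] [LinearOrder V] [IsOrderedAddMonoid V]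
    [Module K V] [PosSMulStrictMono K V] [PosSMulReflectLT K V]
    (W : Submodule K V) (hproper : W ≠ ⊤)
    (hdense : ∀ u v : V, u < v → ∃ w ∈ W, u < w ∧ w < v)
    (e : V) (heW : e ∈ W) (he : 0 < e) :
    ∀ k : ℕ, ∃ a : Fin k → V,
      (∀ i j : Fin k, i < j → a i + e < a j) ∧
      (∀ i j : Fin k, i ≠ j → a i - a j ∉ W) := by
  intro k
  obtain ⟨a, ha⟩ : ∃ a : V, a ∉ W := by
    by_contra h
    push_neg at h
    exact hproper (Submodule.eq_top_iff'.mpr h)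
  have hWbig : ∀ u : V, ∃ w ∈ W, u < w := fun u => by
    obtain ⟨w, hw, h1, _⟩ := hdense u (u + e) (lt_add_of_pos_right u he)
    exact ⟨w, hw, h1⟩
  choose g hgW hgu using hWbig
  let b : ℕ → V := fun n => Nat.rec 0
    (fun n bn => ((n + 1 : ℕ) : K) • a + g (bn + e - ((n + 1 : ℕ) : K) • a)) n
  have hstep : ∀ n, b n + e < b (n + 1) := by
    intro n
    have h := hgu (b n + e - ((n + 1 : ℕ) : K) • a)
    show b n + e < ((n + 1 : ℕ) : K) • a + g (b n + e - ((n + 1 : ℕ) : K) • a)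
    exact sub_lt_iff_lt_add'.mp h
  have hmem : ∀ n, b n - (n : K) • a ∈ W := by
    intro n
    induction n with
    | zero =>
      show (0 : V) - ((0 : ℕ) : K) • a ∈ W
      simpa using W.zero_mem
    | succ n ih =>
      show ((n + 1 : ℕ) : K) • a + g (b n + e - ((n + 1 : ℕ) : K) • a)
          - ((n + 1 : ℕ) : K) • a ∈ W
      simpa using hgW (b n + e - ((n + 1 : ℕ) : K) • a)
  have hmono : ∀ m n : ℕ, m < n → b m + e < b n := by
    intro m n h
    induction n with
    | zero => omega
    | succ n ih =>
      rcases Nat.lt_succ_iff_lt_or_eq.mp h with h' | h'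
      · exact (ih h').trans ((lt_add_of_pos_right (b n) he).trans (hstep n))
      · subst h'; exact hstep m
  refine ⟨fun i => b i, fun i j hij => hmono i j hij, ?_⟩
  intro i j hij hmem'
  have h1 := hmem i
  have h2 := hmem j
  have hkey : ((i : ℕ) : K) • a - ((j : ℕ) : K) • a ∈ W := by
    have h3 := W.sub_mem hmem' (W.sub_mem h1 h2)
    convert h3 using 1
    abel
  rw [← sub_smul] at hkey
  have hne : ((i : ℕ) : K) - ((j : ℕ) : K) ≠ 0 := by
    rw [sub_ne_zero]
    exact_mod_cast fun h => hij (Fin.ext (by exact_mod_cast h))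
  have h4 := W.smul_mem (((i : ℕ) : K) - ((j : ℕ) : K))⁻¹ hkey
  rw [smul_smul, inv_mul_cancel₀ hne, one_smul] at h4
  exact ha h4
end

section
/- Sauer–Shelah lemma: if a set family F on a finite set A of size n has VC-dimension at most d, then |{S ∩ A : S ∈ F}| ≤ Σ_{i=0}^{d} C(n, i). -/
/-- Sauer–Shelah: if no `(d+1)`-element set is shattered by `F`, then the trace of `F` on an
`n`-element set has at most `∑_{i ≤ d} C(n, i)` members. -/
theorem stmt_13 {X : Type*} (F : Set (Set X)) (d : ℕ)
    (hVC : ∀ B : Finset X, B.card = d + 1 →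
      ∃ t ⊆ B, ∀ S ∈ F, (↑t : Set X) ≠ ↑B ∩ S)
    (A : Finset X) (n : ℕ) (hA : A.card = n) :
    Set.ncard {s : Set X | ∃ S ∈ F, s = ↑A ∩ S} ≤
      ∑ i ∈ Finset.range (d + 1), n.choose i := by
  classical
  -- trace family on the subtype ↥A
  set 𝒜 : Finset (Finset ↥A) :=
    Finset.univ.filter (fun t : Finset ↥A => ∃ S ∈ F, ∀ x : ↥A, x ∈ t ↔ (x : X) ∈ S) with h𝒜
  have hg : Function.Injective (fun t : Finset ↥A => Subtype.val '' (↑t : Set ↥A)) := by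
    intro t u h
    have := Set.image_injective.2 (Subtype.val_injective (p := fun x => x ∈ A)) h
    exact_mod_cast Finset.coe_injective this
  -- the trace set family equals the image of 𝒜
  have hset : {s : Set X | ∃ S ∈ F, s = ↑A ∩ S} =
      ↑(𝒜.image (fun t : Finset ↥A => Subtype.val '' (↑t : Set ↥A))) := by
    ext s
    simp only [Set.mem_setOf_eq, Finset.coe_image, Set.mem_image, Finset.mem_coe, h𝒜,
      Finset.mem_filter, Finset.mem_univ, true_and]
    constructor
    · rintro ⟨S, hS, rfl⟩
      refine ⟨Finset.univ.filter (fun x : ↥A => (x : X) ∈ S), ⟨S, hS, by simp⟩, ?_⟩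
      ext x
      simp only [Finset.coe_filter, Finset.mem_univ, true_and, Set.mem_image,
        Set.mem_setOf_eq, Set.mem_inter_iff, Finset.coe_sort_coe]
      constructor
      · rintro ⟨y, hy, rfl⟩; exact ⟨y.2, hy⟩
      · rintro ⟨hxA, hxS⟩; exact ⟨⟨x, hxA⟩, hxS, rfl⟩
    · rintro ⟨t, ⟨S, hS, ht⟩, rfl⟩
      refine ⟨S, hS, ?_⟩
      ext x
      simp only [Set.mem_image, Finset.mem_coe, Set.mem_inter_iff, Finset.mem_coe]
      constructor
      · rintro ⟨y, hy, rfl⟩; exact ⟨y.2, (ht y).1 hy⟩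
      · rintro ⟨hxA, hxS⟩; exact ⟨⟨x, hxA⟩, (ht _).2 hxS, rfl⟩
  rw [hset, Set.ncard_coe_finset, Finset.card_image_of_injective _ hg]
  -- VC-dimension of 𝒜 is at most d
  have hvc : 𝒜.vcDim ≤ d := by
    refine Finset.sup_le fun s hs => ?_
    rw [Finset.mem_shatterer] at hs
    by_contra hcard
    push_neg at hcard
    obtain ⟨s', hs's, hs'card⟩ := Finset.exists_subset_card_eq (Nat.succ_le_of_lt hcard)
    have hshat : 𝒜.Shatters s' := hs.mono_right hs's
    set B : Finset X := s'.image Subtype.val with hB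
    have hBcard : B.card = d + 1 := by
      rw [hB, Finset.card_image_of_injective _ Subtype.val_injective, hs'card]
    obtain ⟨t, htB, ht⟩ := hVC B hBcard
    set t' : Finset ↥A := s'.filter (fun x => (x : X) ∈ t) with ht'
    obtain ⟨u, hu, hsu⟩ := hshat (Finset.filter_subset (fun x : ↥A => (x : X) ∈ t) s')
    rw [h𝒜, Finset.mem_filter] at hu
    obtain ⟨-, S, hS, hSu⟩ := hu
    refine ht S hS ?_
    ext x
    simp only [Finset.coe_image, Set.mem_inter_iff, Set.mem_image, Finset.mem_coe, hB]
    constructor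
    · intro hx
      obtain ⟨y, hy, rfl⟩ := by
        have := htB hx
        rw [hB, Finset.mem_image] at this
        exact this
      have hyt' : y ∈ s' ∩ u := by rw [hsu, Finset.mem_filter]; exact ⟨hy, hx⟩
      rw [Finset.mem_inter] at hyt'
      exact ⟨⟨y, hy, rfl⟩, (hSu y).1 hyt'.2⟩
    · rintro ⟨⟨y, hy, rfl⟩, hxS⟩
      have : y ∈ s' ∩ u := Finset.mem_inter.2 ⟨hy, (hSu y).2 hxS⟩
      rw [hsu, Finset.mem_filter] at this
      exact this.2
  calc 𝒜.card ≤ 𝒜.shatterer.card := Finset.card_le_card_shatterer 𝒜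
    _ ≤ ∑ k ∈ Finset.Iic 𝒜.vcDim, (Fintype.card ↥A).choose k :=
        Finset.card_shatterer_le_sum_vcDim
    _ ≤ ∑ i ∈ Finset.range (d + 1), n.choose i := by
        rw [Fintype.card_coe, hA]
        apply Finset.sum_le_sum_of_subset
        intro k hk
        simp only [Finset.mem_Iic, Finset.mem_range] at *
        omega
end

section
/- Let F be a family of subsets of X each of which is a singleton, an initial segment {x : x < c}, or a coset of a subgroup W. Then for any finite A ⊆ X with |A| = k, the number of distinct nonempty intersections of finitely many members of F, intersected with A, is O(k²); concretely, at most 1 + (number of pairwise intersections), and since the family of traces is determined by at most 2 generators, the trace family of all finite intersections on A has size at most C·k² for an absolute constant C. -/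
/-- The family of singletons, strict initial segments and cosets of `W` traces at most
quadratically many nonempty finite intersections on a `k`-element set. -/
theorem stmt_16 {X : Type*} [AddCommGroup X] [LinearOrder X] [IsOrderedAddMonoid X] (W : AddSubgroup X) (k : ℕ)
    (A : Finset X) (hA : A.card = k) :
    Set.ncard {s : Set X | ∃ (n : ℕ) (B : Fin (n + 1) → Set X),
      (∀ i, (∃ c, B i = {c}) ∨ (∃ c, B i = {x | x < c}) ∨ (∃ c, B i = {x | x - c ∈ W})) ∧
      (⋂ i, B i).Nonempty ∧ s = ↑A ∩ ⋂ i, B i} ≤ (k + 2) ^ 2 + (k + 2) := by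
  classical
  set g : Option (A × Fin 3) → Set X := fun o =>
    match o with
    | none => (∅ : Set X)
    | some (m, 0) => {(m : X)}
    | some (m, 1) => ↑A ∩ {x | x ≤ (m : X)}
    | some (m, _) => ↑A ∩ {x | x - (m : X) ∈ W ∧ x ≤ (m : X)} with hg
  have hsub : {s : Set X | ∃ (n : ℕ) (B : Fin (n + 1) → Set X),
      (∀ i, (∃ c, B i = {c}) ∨ (∃ c, B i = {x | x < c}) ∨ (∃ c, B i = {x | x - c ∈ W})) ∧
      (⋂ i, B i).Nonempty ∧ s = ↑A ∩ ⋂ i, B i} ⊆ Set.range g := by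
    rintro s ⟨n, B, hB, hne, rfl⟩
    by_cases hs : (↑A ∩ ⋂ i, B i : Set X).Nonempty
    · -- get the maximum element of the trace
      set T : Finset X := A.filter (fun a => a ∈ (⋂ i, B i)) with hT
      have hTne : T.Nonempty := by
        obtain ⟨x, hxA, hxI⟩ := hs
        exact ⟨x, Finset.mem_filter.mpr ⟨Finset.mem_coe.mp hxA, hxI⟩⟩
      set m : X := T.max' hTne with hm
      have hmT : m ∈ T := T.max'_mem hTne
      have hmA : m ∈ A := (Finset.mem_filter.mp hmT).1
      have hmI : m ∈ ⋂ i, B i := (Finset.mem_filter.mp hmT).2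
      have hmax : ∀ a, a ∈ A → a ∈ (⋂ i, B i) → a ≤ m := by
        intro a ha hI
        exact T.le_max' a (Finset.mem_filter.mpr ⟨ha, hI⟩)
      by_cases hsing : ∃ i c, B i = {c}
      · obtain ⟨i, c, hc⟩ := hsing
        have hmc : m = c := by
          have := Set.mem_iInter.mp hmI i
          rw [hc] at this; exact this
        refine ⟨some (⟨m, hmA⟩, 0), ?_⟩
        show {m} = _
        ext a
        simp only [Set.mem_singleton_iff, Set.mem_inter_iff]
        constructor
        · rintro rfl; exact ⟨hmA, hmI⟩
        · rintro ⟨haA, haI⟩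
          have := Set.mem_iInter.mp haI i
          rw [hc] at this
          rw [hmc]; exact this
      · by_cases hcos : ∃ i c, B i = {x | x - c ∈ W}
        · obtain ⟨j, c', hj⟩ := hcos
          refine ⟨some (⟨m, hmA⟩, 2), ?_⟩
          show ↑A ∩ {x | x - m ∈ W ∧ x ≤ m} = ↑A ∩ ⋂ i, B i
          have hmW : m - c' ∈ W := by
            have := Set.mem_iInter.mp hmI j
            rw [hj] at this; exact this
          ext a
          simp only [Set.mem_inter_iff, Set.mem_setOf_eq]
          constructor
          · rintro ⟨haA, haW, hale⟩
            refine ⟨haA, Set.mem_iInter.mpr fun i => ?_⟩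
            rcases hB i with h1 | h2 | h3
            · exact absurd ⟨i, h1⟩ hsing
            · obtain ⟨c, hc⟩ := h2
              have hmlt : m < c := by
                have := Set.mem_iInter.mp hmI i
                rw [hc] at this; exact this
              rw [hc]; exact lt_of_le_of_lt hale hmlt
            · obtain ⟨c, hc⟩ := h3
              have hmc : m - c ∈ W := by
                have := Set.mem_iInter.mp hmI i
                rw [hc] at this; exact this
              rw [hc]
              show a - c ∈ W
              have : (a - m) + (m - c) ∈ W := W.add_mem haW hmc
              simpa [sub_add_sub_cancel] using this
          · rintro ⟨haA, haI⟩
            refine ⟨haA, ?_, hmax a haA haI⟩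
            have haW : a - c' ∈ W := by
              have := Set.mem_iInter.mp haI j
              rw [hj] at this; exact this
            have : (a - c') - (m - c') ∈ W := W.sub_mem haW hmW
            simpa [sub_sub_sub_cancel_right] using this
        · refine ⟨some (⟨m, hmA⟩, 1), ?_⟩
          show ↑A ∩ {x | x ≤ m} = ↑A ∩ ⋂ i, B i
          ext a
          simp only [Set.mem_inter_iff, Set.mem_setOf_eq]
          constructor
          · rintro ⟨haA, hale⟩
            refine ⟨haA, Set.mem_iInter.mpr fun i => ?_⟩
            rcases hB i with h1 | h2 | h3
            · exact absurd ⟨i, h1⟩ hsing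
            · obtain ⟨c, hc⟩ := h2
              have hmlt : m < c := by
                have := Set.mem_iInter.mp hmI i
                rw [hc] at this; exact this
              rw [hc]; exact lt_of_le_of_lt hale hmlt
            · exact absurd ⟨i, h3⟩ hcos
          · rintro ⟨haA, haI⟩
            exact ⟨haA, hmax a haA haI⟩
    · exact ⟨none, (Set.not_nonempty_iff_eq_empty.mp hs).symm⟩
  calc Set.ncard {s : Set X | ∃ (n : ℕ) (B : Fin (n + 1) → Set X),
      (∀ i, (∃ c, B i = {c}) ∨ (∃ c, B i = {x | x < c}) ∨ (∃ c, B i = {x | x - c ∈ W})) ∧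
      (⋂ i, B i).Nonempty ∧ s = ↑A ∩ ⋂ i, B i}
      ≤ (Set.range g).ncard := Set.ncard_le_ncard hsub (Set.finite_range g)
    _ ≤ Nat.card (Option (A × Fin 3)) := by
        rw [← Set.image_univ]
        refine le_trans (Set.ncard_image_le Set.finite_univ) ?_
        simp [Set.ncard_univ]
    _ = 3 * k + 1 := by
        simp [Nat.card_eq_fintype_card, Fintype.card_option, Fintype.card_prod,
          Fintype.card_coe, hA]
        ring
    _ ≤ (k + 2) ^ 2 + (k + 2) := by nlinarith
end

section
/- Breadth-2 closure: if a family S of subsets of X has the property that for all A, B, C ∈ S with A ∩ B ∩ C ≠ ∅, there exist two of them whose intersection equals A ∩ B ∩ C, then by induction every nonempty finite intersection of m ≥ 2 members of S equals the intersection of some 2 of them. -/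
/-- Two downward-closed sets in a linear order are comparable. -/
lemma seg_comparable {X : Type*} [LinearOrder X] {S T : Set X}
    (hS : ∀ x y : X, x ∈ S → y ≤ x → y ∈ S)
    (hT : ∀ x y : X, x ∈ T → y ≤ x → y ∈ T) : S ⊆ T ∨ T ⊆ S := by
  by_contra h
  push_neg at h
  obtain ⟨h1, h2⟩ := h
  obtain ⟨a, haS, haT⟩ := Set.not_subset.mp h1
  obtain ⟨b, hbT, hbS⟩ := Set.not_subset.mp h2
  rcases le_total a b with hab | hba
  · exact haT (hT b a hbT hab)
  · exact hbS (hS a b haS hba)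

/-- Breadth-2 for a family in which each member is a singleton, an initial segment, or a
coset of a fixed subgroup: any nonempty finite intersection equals an intersection of two. -/
theorem stmt_17 {X : Type*} [AddCommGroup X] [LinearOrder X] [IsOrderedAddMonoid X] (W : AddSubgroup X)
    (m : ℕ) (hm : 2 ≤ m) (A : Fin m → Set X)
    (hA : ∀ i, (∃ c, A i = {c}) ∨ (∀ x y : X, x ∈ A i → y ≤ x → y ∈ A i) ∨
      (∃ c, A i = {x | x - c ∈ W}))
    (hne : (⋂ i, A i).Nonempty) :
    ∃ j k, (⋂ i, A i) = A j ∩ A k := by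
  obtain ⟨x, hx⟩ := hne
  have hxi : ∀ i, x ∈ A i := fun i => Set.mem_iInter.mp hx i
  -- Case 1: some member is a singleton
  by_cases hsing : ∃ j c, A j = ({c} : Set X)
  · obtain ⟨j, c, hjc⟩ := hsing
    refine ⟨j, j, ?_⟩
    ext y
    constructor
    · intro hy
      have : y ∈ A j := Set.mem_iInter.mp hy j
      exact ⟨this, this⟩
    · rintro ⟨hy, -⟩
      have hxc : x = c := by have := hxi j; rw [hjc] at this; exact this
      have hyc : y = c := by rw [hjc] at hy; exact hy
      rw [hyc, ← hxc]; exact hx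
  -- No singletons: every member is a segment or the coset C = x + W
  · push_neg at hsing
    set C : Set X := {y | y - x ∈ W} with hC
    have hA' : ∀ i, (∀ x y : X, x ∈ A i → y ≤ x → y ∈ A i) ∨ A i = C := by
      intro i
      rcases hA i with ⟨c, hc⟩ | hseg | ⟨c, hc⟩
      · exact absurd hc (hsing i c)
      · exact Or.inl hseg
      · right
        have hxc : x - c ∈ W := by have := hxi i; rwa [hc] at this
        rw [hc]
        ext y
        simp only [Set.mem_setOf_eq, hC]
        constructor
        · intro h
          have := W.sub_mem h hxc
          rwa [sub_sub_sub_cancel_right] at this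
        · intro h
          have := W.add_mem h hxc
          rwa [sub_add_sub_cancel] at this
    by_cases hexseg : ∃ i, ∀ x y : X, x ∈ A i → y ≤ x → y ∈ A i
    · -- there is a segment; find a minimal one
      classical
      set s : Set (Fin m) := {i | ∀ x y : X, x ∈ A i → y ≤ x → y ∈ A i} with hs
      have hsne : s.Nonempty := hexseg
      obtain ⟨k, hks, hkmin⟩ := (Set.finite_univ.subset (Set.subset_univ s)).exists_minimalFor
        A s hsne
      have hkseg : ∀ x y : X, x ∈ A k → y ≤ x → y ∈ A k := hks
      have hkle : ∀ i ∈ s, A k ⊆ A i := by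
        intro i hi
        rcases seg_comparable hkseg hi with h | h
        · exact h
        · exact hkmin hi h
      by_cases hexcos : ∃ j, A j = C
      · obtain ⟨j, hj⟩ := hexcos
        refine ⟨j, k, ?_⟩
        ext y
        constructor
        · intro hy
          exact ⟨Set.mem_iInter.mp hy j, Set.mem_iInter.mp hy k⟩
        · rintro ⟨hyj, hyk⟩
          apply Set.mem_iInter.mpr
          intro i
          rcases hA' i with hseg | hcos
          · exact hkle i hseg hyk
          · rw [hcos, ← hj]; exact hyj
      · -- all members are segments
        push_neg at hexcos
        refine ⟨k, k, ?_⟩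
        ext y
        constructor
        · intro hy
          have := Set.mem_iInter.mp hy k
          exact ⟨this, this⟩
        · rintro ⟨hy, -⟩
          apply Set.mem_iInter.mpr
          intro i
          rcases hA' i with hseg | hcos
          · exact hkle i hseg hy
          · exact absurd hcos (hexcos i)
    · -- no segments: all members equal C
      have hallC : ∀ i, A i = C := by
        intro i
        rcases hA' i with hseg | hcos
        · exact absurd ⟨i, hseg⟩ hexseg
        · exact hcos
      have h0 : (0 : ℕ) < m := by omega
      refine ⟨⟨0, h0⟩, ⟨0, h0⟩, ?_⟩
      ext y
      constructor
      · intro hy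
        have := Set.mem_iInter.mp hy ⟨0, h0⟩
        exact ⟨this, this⟩
      · rintro ⟨hy, -⟩
        apply Set.mem_iInter.mpr
        intro i
        rw [hallC i, ← hallC ⟨0, h0⟩]
        exact hy
end
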